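/- On T_q, the inverse Abel transform formula holds: if 𝒜f(h) = q^{|h|/2} f(|h|) + ((q−1)/q) ∑_{j=1}^∞ q^{|h|/2+j} f(|h|+2j) for f in the radial Schwartz space (i.e. q^{r/2} f(r) rapidly decreasing), then f(r) = ∑_{j=0}^∞ q^{−r/2−j} (𝒜f(r+2j) − 𝒜f(r+2j+2)) for all r ∈ ℕ. -/

import Mathlib

open Real Filter Topology

/-- Inversion of the Abel transform on the homogeneous tree `T_q`: if
`𝒜f(h) = q^{h/2}f(h) + ((q−1)/q)∑_{j≥1} q^{h/2+j} f(h+2j)` for `f` in the radial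
Schwartz space (i.e. `r^m q^{r/2} f(r)` bounded for all `m`), then
`f(r) = ∑_{j≥0} q^{−r/2−j}(𝒜f(r+2j) − 𝒜f(r+2j+2))` for all `r ∈ ℕ`. -/
theorem stmt_14 (q : ℕ) (hq : 2 ≤ q) (f : ℕ → ℂ)
    (hschwartz : ∀ m : ℕ, ∃ C : ℝ, ∀ r : ℕ,
      (r : ℝ) ^ m * (q : ℝ) ^ ((r : ℝ) / 2) * ‖f r‖ ≤ C)
    (A : ℕ → ℂ)
    (hA : ∀ h : ℕ, A h = ((q : ℝ) ^ ((h : ℝ) / 2) : ℝ) * f h +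
      (((q : ℝ) - 1) / q : ℝ) *
        ∑' j : ℕ, ((q : ℝ) ^ ((h : ℝ) / 2 + (j : ℝ) + 1) : ℝ) * f (h + 2 * (j + 1))) :
    ∀ r : ℕ, f r = ∑' j : ℕ,
      ((q : ℝ) ^ (-(r : ℝ) / 2 - (j : ℝ)) : ℝ) * (A (r + 2 * j) - A (r + 2 * j + 2)) := by
  have hQ1 : (1:ℝ) < (q:ℝ) := by exact_mod_cast lt_of_lt_of_le one_lt_two hq
  have hQ0 : (0:ℝ) < (q:ℝ) := by linarith
  obtain ⟨C2, hC2⟩ := hschwartz 2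
  obtain ⟨C0, hC0⟩ := hschwartz 0
  have hC0' : ∀ s : ℕ, ‖f s‖ ≤ C0 * ((q:ℝ) ^ ((s:ℝ)/2))⁻¹ := by
    intro s
    have h := hC0 s
    rw [pow_zero, one_mul] at h
    have hp : (0:ℝ) < (q:ℝ) ^ ((s:ℝ)/2) := Real.rpow_pos_of_pos hQ0 _
    have h2 : ‖f s‖ ≤ C0 / ((q:ℝ) ^ ((s:ℝ)/2)) := by
      rw [le_div_iff₀ hp, mul_comm]; exact h
    simpa [div_eq_mul_inv] using h2
  -- Summability of the Abel series
  have hsum : ∀ h : ℕ, Summable (fun j : ℕ =>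
      (((q : ℝ) ^ ((h : ℝ) / 2 + (j : ℝ) + 1) : ℝ) : ℂ) * f (h + 2 * (j + 1))) := by
    intro h
    apply Summable.of_norm
    have hbound : ∀ j : ℕ, ‖(((q : ℝ) ^ ((h : ℝ) / 2 + (j : ℝ) + 1) : ℝ) : ℂ)
        * f (h + 2 * (j + 1))‖ ≤ C2 * (1 / ((j:ℝ)+1) ^ 2) := by
      intro j
      set s : ℕ := h + 2 * (j + 1) with hs
      have he : (h : ℝ) / 2 + (j : ℝ) + 1 = (s : ℝ) / 2 := by
        rw [hs]; push_cast; ring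
      have hn : ‖(((q : ℝ) ^ ((h : ℝ) / 2 + (j : ℝ) + 1) : ℝ) : ℂ) * f s‖
          = (q:ℝ) ^ ((s:ℝ)/2) * ‖f s‖ := by
        rw [norm_mul, Complex.norm_real, Real.norm_eq_abs, he,
          abs_of_pos (Real.rpow_pos_of_pos hQ0 _)]
      rw [hn]
      have hX : (0:ℝ) ≤ (q:ℝ) ^ ((s:ℝ)/2) * ‖f s‖ :=
        mul_nonneg (Real.rpow_pos_of_pos hQ0 _).le (norm_nonneg _)
      have hs2 : ((j:ℝ)+1) ^ 2 ≤ (s:ℝ) ^ 2 := by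
        have : (j:ℝ) + 1 ≤ (s:ℝ) := by
          rw [hs]; push_cast; linarith [Nat.cast_nonneg (α := ℝ) h, Nat.cast_nonneg (α := ℝ) j]
        nlinarith [Nat.cast_nonneg (α := ℝ) j]
      have h1 : ((j:ℝ)+1) ^ 2 * ((q:ℝ) ^ ((s:ℝ)/2) * ‖f s‖) ≤ C2 := by
        calc ((j:ℝ)+1) ^ 2 * ((q:ℝ) ^ ((s:ℝ)/2) * ‖f s‖)
            ≤ (s:ℝ) ^ 2 * ((q:ℝ) ^ ((s:ℝ)/2) * ‖f s‖) := by
              exact mul_le_mul_of_nonneg_right hs2 hX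
          _ ≤ C2 := by rw [← mul_assoc]; exact hC2 s
      have hjp : (0:ℝ) < ((j:ℝ)+1) ^ 2 := by positivity
      rw [mul_one_div, le_div_iff₀ hjp, mul_comm]
      exact h1
    apply Summable.of_nonneg_of_le (fun j => norm_nonneg _) hbound
    exact (Summable.mul_left C2
      (((summable_nat_add_iff 1).mpr (Real.summable_one_div_nat_pow.mpr one_lt_two)).congr
        (by intro j; push_cast; ring)))
  -- Key: A h - A (h+2) = q^{h/2} (f h - f (h+2))
  have hdiff : ∀ h : ℕ, A h - A (h + 2)
      = (((q:ℝ) ^ ((h:ℝ)/2) : ℝ) : ℂ) * (f h - f (h + 2)) := by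
    intro h
    have hshift : (∑' j : ℕ, (((q : ℝ) ^ ((h : ℝ) / 2 + (j : ℝ) + 1) : ℝ) : ℂ)
          * f (h + 2 * (j + 1)))
        = (((q:ℝ) ^ ((h:ℝ)/2 + 1) : ℝ) : ℂ) * f (h + 2)
          + ∑' j : ℕ, (((q : ℝ) ^ (((h+2 : ℕ) : ℝ) / 2 + (j : ℝ) + 1) : ℝ) : ℂ)
            * f ((h+2) + 2 * (j + 1)) := by
      rw [Summable.tsum_eq_zero_add (hsum h)]
      congr 1
      · norm_num
      · apply tsum_congr
        intro j
        have harg : h + 2 * (j + 1 + 1) = (h + 2) + 2 * (j + 1) := by ring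
        rw [harg]
        congr 2
        push_cast; ring
    rw [hA h, hA (h+2), hshift]
    have e1 : ((q:ℝ) ^ ((h:ℝ)/2 + 1) : ℝ) = (q:ℝ) ^ ((h:ℝ)/2) * q := by
      rw [Real.rpow_add hQ0, Real.rpow_one]
    have e2 : ((q:ℝ) ^ (((h+2:ℕ):ℝ)/2) : ℝ) = (q:ℝ) ^ ((h:ℝ)/2) * q := by
      rw [show ((h+2:ℕ):ℝ)/2 = (h:ℝ)/2 + 1 by push_cast; ring, e1]
    rw [e1, e2]
    obtain ⟨T, hT⟩ : ∃ T : ℂ, (∑' j : ℕ,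
        (((q : ℝ) ^ (((h+2 : ℕ) : ℝ) / 2 + (j : ℝ) + 1) : ℝ) : ℂ)
          * f ((h+2) + 2 * (j + 1))) = T := ⟨_, rfl⟩
    rw [hT]
    have hqne : ((q:ℝ) : ℂ) ≠ 0 := by
      simp only [ne_eq, Complex.ofReal_eq_zero]; exact hQ0.ne'
    push_cast at hqne ⊢
    field_simp
    ring
  intro r
  -- each term of the inversion series is a telescoping difference
  have hterm : ∀ j : ℕ, (((q : ℝ) ^ (-(r : ℝ) / 2 - (j : ℝ)) : ℝ) : ℂ)
      * (A (r + 2 * j) - A (r + 2 * j + 2))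
      = f (r + 2 * j) - f (r + 2 * (j + 1)) := by
    intro j
    have h2 : r + 2 * j + 2 = (r + 2 * j) + 2 := by ring
    rw [h2, hdiff (r + 2 * j)]
    have harg : r + 2 * (j + 1) = (r + 2 * j) + 2 := by ring
    rw [harg, ← mul_assoc, ← Complex.ofReal_mul, ← Real.rpow_add hQ0,
      show -(r:ℝ)/2 - (j:ℝ) + ((r + 2*j : ℕ):ℝ)/2 = 0 by push_cast; ring,
      Real.rpow_zero, Complex.ofReal_one, one_mul]
  rw [tsum_congr hterm]
  -- telescoping sum
  have hu : Summable (fun j : ℕ => f (r + 2 * j)) := by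
    apply Summable.of_norm
    have hb : ∀ j : ℕ, ‖f (r + 2 * j)‖
        ≤ (C0 * ((q:ℝ) ^ ((r:ℝ)/2))⁻¹) * (((q:ℝ))⁻¹) ^ j := by
      intro j
      have := hC0' (r + 2 * j)
      refine this.trans_eq ?_
      rw [show ((r + 2*j : ℕ):ℝ)/2 = (r:ℝ)/2 + (j:ℕ) by push_cast; ring,
        Real.rpow_add hQ0, Real.rpow_natCast, mul_inv, ← mul_assoc, inv_pow]
    apply Summable.of_nonneg_of_le (fun j => norm_nonneg _) hb
    exact Summable.mul_left _ (summable_geometric_of_lt_one (by positivity)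
      (inv_lt_one_of_one_lt₀ hQ1))
  have hu' : Summable (fun j : ℕ => f (r + 2 * (j + 1))) := by
    have := (summable_nat_add_iff 1).mpr hu
    exact this.congr (by intro j; rfl)
  have hsub : Summable (fun j : ℕ => f (r + 2 * j) - f (r + 2 * (j + 1))) := hu.sub hu'
  have htend : Tendsto (fun n : ℕ => f (r + 2 * n)) atTop (𝓝 0) := by
    apply squeeze_zero_norm (a := fun j => (C0 * ((q:ℝ) ^ ((r:ℝ)/2))⁻¹) * (((q:ℝ))⁻¹) ^ j)
    · intro j
      have := hC0' (r + 2 * j)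
      refine this.trans_eq ?_
      rw [show ((r + 2*j : ℕ):ℝ)/2 = (r:ℝ)/2 + (j:ℕ) by push_cast; ring,
        Real.rpow_add hQ0, Real.rpow_natCast, mul_inv, ← mul_assoc, inv_pow]
    · have : Tendsto (fun j : ℕ => (((q:ℝ))⁻¹) ^ j) atTop (𝓝 0) :=
        tendsto_pow_atTop_nhds_zero_of_lt_one (by positivity) (inv_lt_one_of_one_lt₀ hQ1)
      simpa using this.const_mul (C0 * ((q:ℝ) ^ ((r:ℝ)/2))⁻¹)
  have hHasSum : HasSum (fun j : ℕ => f (r + 2 * j) - f (r + 2 * (j + 1))) (f r) := by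
    rw [hsub.hasSum_iff_tendsto_nat]
    have heq : ∀ n : ℕ, ∑ i ∈ Finset.range n, (f (r + 2 * i) - f (r + 2 * (i + 1)))
        = f (r + 2 * 0) - f (r + 2 * n) :=
      fun n => Finset.sum_range_sub' (fun i => f (r + 2 * i)) n
    simp only [heq]
    have : Tendsto (fun n : ℕ => f (r + 2 * 0) - f (r + 2 * n)) atTop
        (𝓝 (f (r + 2 * 0) - 0)) := tendsto_const_nhds.sub htend
    simpa using this
  exact hHasSum.tsum_eq.symm
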